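/- Let p be a prime and m a positive integer. The p^m × p^m matrix over F_p with entries binomial(i+j, j) mod p for 0 ≤ i, j < p^m is an upper anti-diagonal triangular matrix: all entries with i + j > p^m - 1 are zero, all anti-diagonal entries (i + j = p^m - 1) are nonzero, and the first row and first column consist entirely of 1s. In particular the matrix is invertible over F_p. -/
import Mathlib

/-- If `n ≥ p^m`, `j < p^m` and `n - j < p^m`, then `p ∣ n.choose j`. -/
lemma pascal_key_zero (p : ℕ) (hp : p.Prime) :
    ∀ m n j : ℕ, p ^ m ≤ n → j < p ^ m → n - j < p ^ m → p ∣ n.choose j := by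
  intro m
  induction m with
  | zero => intro n j hn hj hnj; simp only [pow_zero] at hn hj hnj; omega
  | succ m ih =>
    intro n j hn hj hnj
    haveI : Fact p.Prime := ⟨hp⟩
    have hmod := Choose.choose_modEq_choose_mod_mul_choose_div_nat (p := p) (n := n) (k := j)
    have hp1 : 1 < p := hp.one_lt
    rcases lt_or_ge (n % p) (j % p) with h | h
    · have h0 : (n % p).choose (j % p) = 0 := Nat.choose_eq_zero_of_lt h
      have : p ∣ (n % p).choose (j % p) * (n / p).choose (j / p) := by
        rw [h0]; simp
      exact (Nat.modEq_zero_iff_dvd).mp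
        (hmod.trans ((Nat.modEq_zero_iff_dvd).mpr this))
    · -- no borrow in the last digit; recurse
      have hjn : j ≤ n := le_of_lt (lt_of_lt_of_le hj hn)
      have hdivle : j / p ≤ n / p := Nat.div_le_div_right hjn
      have h1 := Nat.div_add_mod n p
      have h2 := Nat.div_add_mod j p
      have hnp : p ^ m ≤ n / p := by
        rw [Nat.le_div_iff_mul_le (by omega)]
        calc p ^ m * p = p ^ (m + 1) := (pow_succ p m).symm
        _ ≤ n := hn
      have hjp : j / p < p ^ m := by
        rw [Nat.div_lt_iff_lt_mul (by omega)]
        calc j < p ^ (m + 1) := hj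
        _ = p ^ m * p := pow_succ p m
      have hsub : p * (n / p - j / p) ≤ n - j := by
        rw [Nat.mul_sub]
        omega
      have hnjp : n / p - j / p < p ^ m := by
        have h3 : n - j < p ^ m * p := by
          calc n - j < p ^ (m + 1) := hnj
          _ = p ^ m * p := pow_succ p m
        have h4 : p * (n / p - j / p) < p * p ^ m := by
          calc p * (n / p - j / p) ≤ n - j := hsub
          _ < p ^ m * p := h3
          _ = p * p ^ m := mul_comm _ _
        exact lt_of_mul_lt_mul_left h4 (Nat.zero_le p)
      have hdvd : p ∣ (n / p).choose (j / p) := ih (n / p) (j / p) hnp hjp hnjp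
      have : p ∣ (n % p).choose (j % p) * (n / p).choose (j / p) := hdvd.mul_left _
      exact (Nat.modEq_zero_iff_dvd).mp
        (hmod.trans ((Nat.modEq_zero_iff_dvd).mpr this))

/-- `C(p-1, k) ≡ (-1)^k mod p` for `k < p`. -/
lemma pascal_choose_p_sub_one (p : ℕ) (hp : p.Prime) :
    ∀ k : ℕ, k < p → (((p - 1).choose k : ZMod p)) = (-1) ^ k := by
  intro k
  induction k with
  | zero => intro _; simp
  | succ k ih =>
    intro hk
    haveI : Fact p.Prime := ⟨hp⟩
    have hkp : k < p := by omega
    have hps : p - 1 + 1 = p := by have := hp.one_lt; omega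
    have hrec : p.choose (k + 1) = (p - 1).choose k + (p - 1).choose (k + 1) := by
      conv_lhs => rw [← hps]
      exact Nat.choose_succ_succ _ _
    have hdvd : p ∣ p.choose (k + 1) := hp.dvd_choose_self (Nat.succ_ne_zero k) hk
    have h0 : ((p.choose (k + 1) : ZMod p)) = 0 :=
      (ZMod.natCast_eq_zero_iff _ _).mpr hdvd
    rw [hrec] at h0
    push_cast at h0
    rw [ih hkp] at h0
    have : ((p - 1).choose (k + 1) : ZMod p) = -(-1) ^ k := by linear_combination h0
    rw [this, pow_succ]
    ring

/-- `p ∤ C(p^m - 1, j)` for `j ≤ p^m - 1`. -/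
lemma pascal_key_ne (p : ℕ) (hp : p.Prime) :
    ∀ m j : ℕ, j ≤ p ^ m - 1 → ¬ p ∣ (p ^ m - 1).choose j := by
  intro m
  induction m with
  | zero =>
    intro j hj
    simp only [pow_zero] at hj
    interval_cases j
    simpa using hp.one_lt.ne'
  | succ m ih =>
    intro j hj
    haveI : Fact p.Prime := ⟨hp⟩
    have hp1 : 1 < p := hp.one_lt
    have hpm : 1 ≤ p ^ m := Nat.one_le_pow _ _ (by omega)
    have hpow : p ^ (m + 1) = p ^ m * p := pow_succ p m
    have e1 : (p ^ m - 1) * p = p ^ m * p - p := by rw [Nat.sub_mul, one_mul]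
    have hn : p ^ (m + 1) - 1 = p * (p ^ m - 1) + (p - 1) := by
      rw [mul_comm p (p ^ m - 1), e1]
      have : p ≤ p ^ m * p := Nat.le_mul_of_pos_left p hpm
      omega
    have hmodp : (p ^ (m + 1) - 1) % p = p - 1 := by
      rw [hn, Nat.mul_add_mod, Nat.mod_eq_of_lt (by omega)]
    have hdivp : (p ^ (m + 1) - 1) / p = p ^ m - 1 := by
      rw [hn, Nat.mul_add_div (by omega), Nat.div_eq_of_lt (by omega), Nat.add_zero]
    have hmod := Choose.choose_modEq_choose_mod_mul_choose_div_nat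
      (p := p) (n := p ^ (m + 1) - 1) (k := j)
    rw [hmodp, hdivp] at hmod
    intro hdvd
    have hprod : p ∣ (p - 1).choose (j % p) * (p ^ m - 1).choose (j / p) :=
      (Nat.modEq_zero_iff_dvd).mp
        (hmod.symm.trans ((Nat.modEq_zero_iff_dvd).mpr hdvd))
    rcases (Nat.Prime.dvd_mul hp).mp hprod with h | h
    · -- contradicts C(p-1, j%p) ≡ (-1)^(j%p)
      have hjp : j % p < p := Nat.mod_lt _ (by omega)
      have h0 : (((p - 1).choose (j % p) : ZMod p)) = 0 :=
        (ZMod.natCast_eq_zero_iff _ _).mpr h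
      rw [pascal_choose_p_sub_one p hp _ hjp] at h0
      have : IsUnit ((-1 : ZMod p) ^ (j % p)) := (isUnit_one.neg).pow _
      exact this.ne_zero h0
    · -- contradicts induction hypothesis
      refine ih (j / p) ?_ h
      have : j / p ≤ (p ^ (m + 1) - 1) / p := Nat.div_le_div_right hj
      rw [hdivp] at this
      exact this

theorem pascal_anti_triangular (p m : ℕ) (hp : p.Prime) (hm : 1 ≤ m) :
    (∀ i j : Fin (p ^ m), p ^ m - 1 < (i : ℕ) + (j : ℕ) →
        (((i : ℕ) + (j : ℕ)).choose (j : ℕ) : ZMod p) = 0) ∧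
    (∀ i j : Fin (p ^ m), (i : ℕ) + (j : ℕ) = p ^ m - 1 →
        (((i : ℕ) + (j : ℕ)).choose (j : ℕ) : ZMod p) ≠ 0) ∧
    (∀ j : Fin (p ^ m), (((0 : ℕ) + (j : ℕ)).choose (j : ℕ) : ZMod p) = 1) ∧
    (∀ i : Fin (p ^ m), (((i : ℕ) + (0 : ℕ)).choose (0 : ℕ) : ZMod p) = 1) ∧
    IsUnit (Matrix.of (fun (i j : Fin (p ^ m)) =>
      (((i : ℕ) + (j : ℕ)).choose (j : ℕ) : ZMod p))).det := by
  haveI : Fact p.Prime := ⟨hp⟩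
  have hp1 : 1 < p := hp.one_lt
  have hpm : 1 ≤ p ^ m := Nat.one_le_pow _ _ (by omega)
  have hzero : ∀ i j : Fin (p ^ m), p ^ m - 1 < (i : ℕ) + (j : ℕ) →
      (((i : ℕ) + (j : ℕ)).choose (j : ℕ) : ZMod p) = 0 := by
    intro i j hij
    have h1 : p ^ m ≤ (i : ℕ) + (j : ℕ) := by omega
    have h2 : (j : ℕ) < p ^ m := j.isLt
    have h3 : (i : ℕ) + (j : ℕ) - (j : ℕ) < p ^ m := by
      have := i.isLt; omega
    exact (ZMod.natCast_eq_zero_iff _ _).mpr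
      (pascal_key_zero p hp m _ _ h1 h2 h3)
  have hanti : ∀ i j : Fin (p ^ m), (i : ℕ) + (j : ℕ) = p ^ m - 1 →
      (((i : ℕ) + (j : ℕ)).choose (j : ℕ) : ZMod p) ≠ 0 := by
    intro i j hij h0
    rw [hij] at h0
    exact pascal_key_ne p hp m (j : ℕ) (by omega)
      ((ZMod.natCast_eq_zero_iff _ _).mp h0)
  refine ⟨hzero, hanti, ?_, ?_, ?_⟩
  · intro j; rw [Nat.zero_add, Nat.choose_self]; exact Nat.cast_one
  · intro i; rw [Nat.choose_zero_right]; exact Nat.cast_one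
  · -- invertibility
    set M : Matrix (Fin (p ^ m)) (Fin (p ^ m)) (ZMod p) :=
      Matrix.of (fun (i j : Fin (p ^ m)) =>
        (((i : ℕ) + (j : ℕ)).choose (j : ℕ) : ZMod p)) with hM
    set N : Matrix (Fin (p ^ m)) (Fin (p ^ m)) (ZMod p) :=
      M.submatrix id Fin.revPerm with hN
    have hNdet : N.det = (Equiv.Perm.sign (Fin.revPerm : Equiv.Perm (Fin (p ^ m)))) * M.det :=
      Matrix.det_permute' _ _
    have hNtri : N.det = ∏ i : Fin (p ^ m), N i i := by
      apply Matrix.det_of_upperTriangular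
      intro i j hij
      simp only [hN, Matrix.submatrix_apply, id_eq, Fin.revPerm_apply]
      apply hzero
      have hi := i.isLt
      have hj : (j : ℕ) < p ^ m := j.isLt
      have : ((j.rev : Fin (p ^ m)) : ℕ) = p ^ m - ((j : ℕ) + 1) := Fin.val_rev j
      rw [this]
      have hji : (j : ℕ) < (i : ℕ) := hij
      omega
    have hNne : N.det ≠ 0 := by
      rw [hNtri]
      apply Finset.prod_ne_zero_iff.mpr
      intro i _
      simp only [hN, Matrix.submatrix_apply, id_eq, Fin.revPerm_apply]
      apply hanti
      have : ((i.rev : Fin (p ^ m)) : ℕ) = p ^ m - ((i : ℕ) + 1) := Fin.val_rev i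
      rw [this]
      have := i.isLt
      omega
    have hMne : M.det ≠ 0 := by
      intro h
      rw [h, mul_zero] at hNdet
      exact hNne hNdet
    exact isUnit_iff_ne_zero.mpr hMne
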